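/- Let Ω be a domain in ℂ^n containing the origin 0, let t > -n be a real number, and let φ be a plurisubharmonic function on Ω such that a := c_t(φ) < +∞. Then for every real s ≥ t, one has a = c_s(φ + ((s-t)/a)·log‖z‖), where φ + ((s-t)/a)·log‖z‖ is the plurisubharmonic function z ↦ φ(z) + ((s-t)/a)·log‖z‖ on Ω. -/

import Mathlib

open MeasureTheory Filter Metric Topology Complex
open scoped ENNReal EReal

noncomputable section

/-- `ℂ^n` with its Euclidean (Hermitian) norm. -/
abbrev Cn (n : ℕ) : Type := EuclideanSpace ℂ (Fin n)

/-- Lebesgue measure on `ℂ^n ≅ ℝ^{2n}`. -/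
instance Cn.measureSpace (n : ℕ) : MeasureSpace (Cn n) :=
  { volume := Measure.map (MeasurableEquiv.toLp 2 (Fin n → ℂ)) (volume : Measure (Fin n → ℂ)) }

/-- Extended-real-valued logarithm, sending `0` (and negative numbers) to `-∞`. -/
def elog (x : ℝ) : EReal := if x ≤ 0 then (⊥ : EReal) else ((Real.log x : ℝ) : EReal)

/-- `exp : EReal → ℝ≥0∞`, with `exp (-∞) = 0` and `exp (+∞) = +∞`. -/
def erealExp (x : EReal) : ℝ≥0∞ :=
  if x = ⊤ then ⊤ else if x = ⊥ then 0 else ENNReal.ofReal (Real.exp x.toReal)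

/-- The positive part of an extended real number, as an element of `ℝ≥0∞`. -/
def erealPosPart (x : EReal) : ℝ≥0∞ := if x = ⊤ then ⊤ else ENNReal.ofReal x.toReal

/-- The integral of an `EReal`-valued function: upper integral of the positive part minus the
upper integral of the negative part. -/
def erealIntegral {α : Type*} [MeasurableSpace α] (μ : Measure α) (f : α → EReal) : EReal :=
  ((∫⁻ a, erealPosPart (f a) ∂μ : ℝ≥0∞) : EReal) -
    ((∫⁻ a, erealPosPart (-(f a)) ∂μ : ℝ≥0∞) : EReal)

/-- A function `f : ℂ → [-∞, ∞)` is subharmonic on an open set `U ⊆ ℂ` if it is upper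
semicontinuous on `U` and satisfies the sub-mean value inequality on circles contained in `U`
(written in the form `2π · f(z) ≤ ∫_0^{2π} f(z + r e^{iθ}) dθ`). -/
def SubhOn (f : ℂ → EReal) (U : Set ℂ) : Prop :=
  UpperSemicontinuousOn f U ∧
  ∀ z ∈ U, ∀ r : ℝ, 0 < r → closedBall z r ⊆ U →
    ((2 * Real.pi : ℝ) : EReal) * f z ≤
      erealIntegral (volume.restrict (Set.Ioc (0:ℝ) (2 * Real.pi)))
        (fun θ : ℝ => f (z + (r : ℂ) * Complex.exp (θ * Complex.I)))

/-- A function `φ : ℂ^n → [-∞, ∞)` is plurisubharmonic on `Ω` if it is upper semicontinuous on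
`Ω`, not identically `-∞`, never `+∞`, and its restriction to every complex line is subharmonic. -/
def PshOn {n : ℕ} (φ : Cn n → EReal) (Ω : Set (Cn n)) : Prop :=
  UpperSemicontinuousOn φ Ω ∧ (∃ z ∈ Ω, φ z ≠ ⊥) ∧ (∀ z ∈ Ω, φ z ≠ ⊤) ∧
  ∀ a v : Cn n, SubhOn (fun w : ℂ => φ (a + w • v)) {w : ℂ | a + w • v ∈ Ω}

/-- A domain in `ℂ^n`: a nonempty connected open set. -/
def IsCnDomain {n : ℕ} (Ω : Set (Cn n)) : Prop := IsOpen Ω ∧ IsConnected Ω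

/-- The Lelong number of `φ` at the origin: `ν_φ(0) = liminf_{z → 0} φ(z) / log ‖z‖`. -/
def lelong {n : ℕ} (φ : Cn n → EReal) : EReal :=
  liminf (fun z : Cn n => φ z * (((Real.log ‖z‖)⁻¹ : ℝ) : EReal)) (𝓝[≠] (0 : Cn n))

/-- The Lelong number at `0` of the restriction of `φ` to the complex line through `0` with
direction `v`: `ν_{φ|_l}(0) = liminf_{λ → 0} φ(λ v) / log |λ|`. -/
def lelongLine {n : ℕ} (φ : Cn n → EReal) (v : Cn n) : EReal :=
  liminf (fun w : ℂ => φ (w • v) * (((Real.log ‖w‖)⁻¹ : ℝ) : EReal)) (𝓝[≠] (0 : ℂ))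

/-- `‖z‖^{2t} e^{-2cφ}` is (Lebesgue) integrable on some neighborhood of the origin. -/
def lctIntegrable {n : ℕ} (t c : ℝ) (φ : Cn n → EReal) : Prop :=
  ∃ U ∈ 𝓝 (0 : Cn n),
    (∫⁻ z in U, ENNReal.ofReal (‖z‖ ^ (2 * t)) *
        erealExp (((-(2 * c) : ℝ) : EReal) * φ z) ∂volume) < ⊤

/-- The weighted log canonical threshold
`c_t(φ) = sup {c ≥ 0 : ‖z‖^{2t} e^{-2cφ}` is integrable near `0}`, as an element of `[0, ∞]`. -/
def lct {n : ℕ} (t : ℝ) (φ : Cn n → EReal) : ℝ≥0∞ :=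
  ⨆ c ∈ {c : ℝ | 0 ≤ c ∧ lctIntegrable t c φ}, ENNReal.ofReal c

open scoped NNReal

lemma erealExp_coe (x : ℝ) : erealExp (x : EReal) = ENNReal.ofReal (Real.exp x) := by
  simp [erealExp]
lemma erealExp_top : erealExp ⊤ = ⊤ := by simp [erealExp]
lemma erealExp_bot : erealExp ⊥ = 0 := by simp [erealExp]

lemma elog_pos_eq {r : ℝ} (hr : 0 < r) : elog r = ((Real.log r : ℝ) : EReal) := by
  simp [elog, not_le.2 hr]

lemma exp_mono_pt {c c' M : ℝ} (hc : 0 ≤ c) (hcc' : c ≤ c') {x : EReal} (hx : x ≤ (M : ℝ)) :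
    erealExp ((↑(-(2 * c)) : EReal) * x) ≤
      ENNReal.ofReal (Real.exp (2 * (c' - c) * M)) * erealExp ((↑(-(2 * c')) : EReal) * x) := by
  induction x with
  | bot =>
      rcases eq_or_lt_of_le (hc.trans hcc') with h0 | h0
      · have hc0 : c = 0 := le_antisymm (hcc'.trans h0.symm.le) hc
        subst hc0
        rw [← h0]
        norm_num
      · have h1 : ((-(2 * c') : ℝ) : EReal) * ⊥ = ⊤ := EReal.coe_mul_bot_of_neg (by linarith)
        rw [h1, erealExp_top, ENNReal.mul_top (by positivity)]
        exact le_top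
  | top => exact absurd hx (by simp)
  | coe v =>
      have hvM : v ≤ M := by exact_mod_cast hx
      rw [← EReal.coe_mul, ← EReal.coe_mul, erealExp_coe, erealExp_coe,
        ← ENNReal.ofReal_mul (Real.exp_nonneg _), ← Real.exp_add]
      apply ENNReal.ofReal_le_ofReal
      apply Real.exp_le_exp.2
      nlinarith
lemma shift_pt {s c b r : ℝ} (hc : 0 ≤ c) (hr : 0 < r) {x : EReal} (hx : x ≠ ⊤) :
    ENNReal.ofReal (r ^ (2 * s)) *
        erealExp ((↑(-(2 * c)) : EReal) * (x + (b : EReal) * elog r)) =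
      ENNReal.ofReal (r ^ (2 * (s - c * b))) * erealExp ((↑(-(2 * c)) : EReal) * x) := by
  rw [elog_pos_eq hr, ← EReal.coe_mul]
  induction x with
  | top => exact absurd rfl hx
  | bot =>
      rw [EReal.bot_add]
      rcases hc.eq_or_lt with h0 | h0
      · rw [← h0]; norm_num
      · have h1 : ((-(2 * c) : ℝ) : EReal) * ⊥ = ⊤ := EReal.coe_mul_bot_of_neg (by linarith)
        rw [h1, erealExp_top, ENNReal.mul_top (by positivity), ENNReal.mul_top (by positivity)]
  | coe v =>
      rw [← EReal.coe_add, ← EReal.coe_mul, ← EReal.coe_mul, erealExp_coe, erealExp_coe,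
        ← ENNReal.ofReal_mul (by positivity), ← ENNReal.ofReal_mul (by positivity)]
      congr 1
      have h1 : -(2 * c) * (v + b * Real.log r) = -(2 * c * b) * Real.log r + -(2 * c) * v := by
        ring
      rw [h1, Real.exp_add, ← mul_assoc]
      congr 1
      have e1 : Real.exp (-(2 * c * b) * Real.log r) = r ^ (-(2 * c * b)) := by
        rw [Real.rpow_def_of_pos hr, mul_comm]
      rw [e1, ← Real.rpow_add hr]
      ring_nf
lemma young_pt {t s c θ r : ℝ} (hθ0 : 0 < θ) (hθ1 : θ < 1) (hc : 0 < c) (hr : 0 < r)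
    {x : EReal} (hx : x ≠ ⊤) :
    ENNReal.ofReal (r ^ (2 * t)) * erealExp ((↑(-(2 * (θ * c))) : EReal) * x) =
      (ENNReal.ofReal (r ^ (2 * s)) * erealExp ((↑(-(2 * c)) : EReal) * x)) ^ θ *
        ENNReal.ofReal (r ^ (2 * ((t - θ * s) / (1 - θ)))) ^ (1 - θ) := by
  induction x with
  | top => exact absurd rfl hx
  | bot =>
      have h1 : ((-(2 * (θ * c)) : ℝ) : EReal) * ⊥ = ⊤ :=
        EReal.coe_mul_bot_of_neg (by nlinarith)
      have h2 : ((-(2 * c) : ℝ) : EReal) * ⊥ = ⊤ := EReal.coe_mul_bot_of_neg (by linarith)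
      rw [h1, h2, erealExp_top, ENNReal.mul_top (by positivity),
        ENNReal.mul_top (by positivity), ENNReal.top_rpow_of_pos hθ0,
        ENNReal.top_mul]
      exact (ENNReal.rpow_pos (by positivity) ENNReal.ofReal_ne_top).ne'
  | coe v =>
      rw [← EReal.coe_mul, ← EReal.coe_mul, erealExp_coe, erealExp_coe,
        ← ENNReal.ofReal_mul (by positivity), ← ENNReal.ofReal_mul (by positivity),
        ENNReal.ofReal_rpow_of_pos (by positivity), ENNReal.ofReal_rpow_of_pos (by positivity),
        ← ENNReal.ofReal_mul (by positivity)]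
      congr 1
      rw [Real.mul_rpow (by positivity) (by positivity), ← Real.exp_mul]
      rw [← Real.rpow_mul hr.le, ← Real.rpow_mul hr.le]
      have h2 : (1:ℝ) - θ ≠ 0 := by linarith
      have h3 : 2 * ((t - θ * s) / (1 - θ)) * (1 - θ) = 2 * t - 2 * s * θ := by
        field_simp
      rw [h3]
      have h1 : Real.exp (-(2 * (θ * c)) * v) = Real.exp (-(2 * c) * v * θ) := by ring_nf
      rw [h1, show r ^ (2 * t) = r ^ (2 * s * θ) * r ^ (2 * t - 2 * s * θ) by
        rw [← Real.rpow_add hr]; ring_nf]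
      ring
lemma ennreal_young {x y : ℝ≥0∞} {θ : ℝ} (hθ0 : 0 ≤ θ) (hθ1 : θ ≤ 1) :
    x ^ θ * y ^ (1 - θ) ≤ x + y := by
  rcases eq_or_ne x ⊤ with hx | hx
  · simp [hx]
  rcases eq_or_ne y ⊤ with hy | hy
  · simp [hy]
  lift x to ℝ≥0 using hx
  lift y to ℝ≥0 using hy
  rw [← ENNReal.coe_rpow_of_nonneg _ hθ0, ← ENNReal.coe_rpow_of_nonneg _ (by linarith : (0:ℝ) ≤ 1 - θ),
    ← ENNReal.coe_mul, ← ENNReal.coe_add, ENNReal.coe_le_coe]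
  set w : ℝ≥0 := ⟨θ, hθ0⟩ with hw
  have hw1 : w ≤ 1 := by exact_mod_cast hθ1
  have h1 : ((1 - w : ℝ≥0) : ℝ) = 1 - θ := by
    rw [NNReal.coe_sub hw1]; simp [hw]; rfl
  calc x ^ θ * y ^ ((1:ℝ) - θ) = x ^ ((w : ℝ≥0) : ℝ) * y ^ (((1 - w : ℝ≥0)) : ℝ) := by
        rw [h1]
        rfl
    _ ≤ w * x + (1 - w) * y :=
        NNReal.geom_mean_le_arith_mean2_weighted _ _ _ _ (add_tsub_cancel_of_le hw1)
    _ ≤ x + y :=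
        add_le_add (mul_le_of_le_one_left (by positivity) hw1)
          (mul_le_of_le_one_left (by positivity) tsub_le_self)
instance Cn.borelSpace (n : ℕ) : BorelSpace (Cn n) :=
  inferInstance
instance Cn.isAddHaar (n : ℕ) : (volume : Measure (Cn n)).IsAddHaarMeasure :=
  (PiLp.continuousLinearEquiv 2 ℂ (fun _ : Fin n => ℂ)).symm.isAddHaarMeasure_map _

lemma Cn.finrank_eq (n : ℕ) : Module.finrank ℝ (Cn n) = 2 * n := by
  have h1 : Module.finrank ℝ ℂ * Module.finrank ℂ (Cn n) = Module.finrank ℝ (Cn n) :=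
    Module.finrank_mul_finrank ℝ ℂ (Cn n)
  simp only [finrank_euclideanSpace, Fintype.card_fin, Complex.finrank_real_complex] at h1
  omega

lemma Cn.volume_singleton {n : ℕ} (hn : 0 < n) (z : Cn n) :
    (volume : Measure (Cn n)) {z} = 0 := by
  haveI : Nonempty (Fin n) := ⟨⟨0, hn⟩⟩
  exact measure_singleton z

lemma finite_rpow_ball {n : ℕ} (hn : 0 < n) {p : ℝ} (hp : -(2 * (n : ℝ)) < p) :
    (∫⁻ z in ball (0 : Cn n) 1, ENNReal.ofReal (‖z‖ ^ p) ∂volume) < ⊤ := by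
  have hd : (Module.finrank ℝ (Cn n) : ℝ) = 2 * n := by
    rw [Cn.finrank_eq]; push_cast; ring
  rcases le_or_gt 0 p with hp0 | hp0
  · calc (∫⁻ z in ball (0 : Cn n) 1, ENNReal.ofReal (‖z‖ ^ p) ∂volume)
        ≤ ∫⁻ _ in ball (0 : Cn n) 1, 1 ∂volume := by
          refine setLIntegral_mono' measurableSet_ball fun z hz => ?_
          simp only [mem_ball, dist_zero_right] at hz
          calc ENNReal.ofReal (‖z‖ ^ p) ≤ ENNReal.ofReal 1 :=
                ENNReal.ofReal_le_ofReal
                  (Real.rpow_le_one (norm_nonneg _) hz.le hp0)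
          _ = 1 := ENNReal.ofReal_one
      _ = volume (ball (0 : Cn n) 1) := by simp
      _ < ⊤ := measure_ball_lt_top
  · -- p < 0 : layer cake
    have hmeas : AEMeasurable (fun z : Cn n => ‖z‖ ^ p)
        ((volume : Measure (Cn n)).restrict (ball 0 1)) := by
      fun_prop
    rw [lintegral_eq_lintegral_meas_le _ (Eventually.of_forall fun z => by positivity) hmeas]
    have key : ∀ u : ℝ, 1 < u →
        (volume.restrict (ball (0 : Cn n) 1)) {z : Cn n | u ≤ ‖z‖ ^ p} ≤
          ENNReal.ofReal (u ^ ((2 * (n:ℝ)) * p⁻¹)) * volume (ball (0 : Cn n) 1) := by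
      intro u hu
      have hu0 : 0 < u := by linarith
      have hsub : {z : Cn n | u ≤ ‖z‖ ^ p} ⊆ closedBall (0 : Cn n) (u ^ p⁻¹) := by
        intro z hz
        simp only [Set.mem_setOf_eq] at hz
        have hz0 : 0 < ‖z‖ := by
          rcases eq_or_lt_of_le (norm_nonneg z) with h | h
          · exfalso
            rw [← h, Real.zero_rpow (by linarith : p ≠ 0)] at hz
            linarith
          · exact h
        rw [mem_closedBall, dist_zero_right]
        exact (Real.le_rpow_inv_iff_of_neg hz0 hu0 hp0).2 hz
      calc (volume.restrict (ball (0 : Cn n) 1)) {z : Cn n | u ≤ ‖z‖ ^ p}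
          ≤ volume (closedBall (0 : Cn n) (u ^ p⁻¹)) :=
            le_trans (Measure.restrict_le_self _) (measure_mono hsub)
        _ = ENNReal.ofReal ((u ^ p⁻¹) ^ Module.finrank ℝ (Cn n)) * volume (ball (0:Cn n) 1) :=
            Measure.addHaar_closedBall _ _ (Real.rpow_nonneg hu0.le _)
        _ = ENNReal.ofReal (u ^ ((2 * (n:ℝ)) * p⁻¹)) * volume (ball (0 : Cn n) 1) := by
            congr 2
            rw [← Real.rpow_natCast (u ^ p⁻¹), ← Real.rpow_mul hu0.le, hd]
            ring_nf
    calc (∫⁻ u in Set.Ioi (0:ℝ), (volume.restrict (ball (0 : Cn n) 1)) {z | u ≤ ‖z‖ ^ p})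
        ≤ ∫⁻ u in Set.Ioc (0:ℝ) 1 ∪ Set.Ioi 1,
            (volume.restrict (ball (0 : Cn n) 1)) {z | u ≤ ‖z‖ ^ p} :=
          lintegral_mono_set Set.Ioi_subset_Ioc_union_Ioi
      _ ≤ (∫⁻ u in Set.Ioc (0:ℝ) 1, (volume.restrict (ball (0 : Cn n) 1)) {z | u ≤ ‖z‖ ^ p}) +
            ∫⁻ u in Set.Ioi 1, (volume.restrict (ball (0 : Cn n) 1)) {z | u ≤ ‖z‖ ^ p} :=
          lintegral_union_le _ _ _
      _ < ⊤ := by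
          refine ENNReal.add_lt_top.2 ⟨?_, ?_⟩
          · calc _ ≤ ∫⁻ _ in Set.Ioc (0:ℝ) 1, volume (ball (0 : Cn n) 1) := by
                  refine lintegral_mono fun u => ?_
                  exact (measure_mono (Set.subset_univ _)).trans
                    (le_of_eq (Measure.restrict_apply_univ _))
              _ = volume (ball (0 : Cn n) 1) * volume (Set.Ioc (0:ℝ) 1) := by
                  rw [setLIntegral_const]
              _ < ⊤ := ENNReal.mul_lt_top measure_ball_lt_top (by simp)
          · calc _ ≤ ∫⁻ u in Set.Ioi (1:ℝ),
                  ENNReal.ofReal (u ^ ((2 * (n:ℝ)) * p⁻¹)) * volume (ball (0 : Cn n) 1) := by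
                  refine setLIntegral_mono' measurableSet_Ioi fun u hu => key u hu
              _ = (∫⁻ u in Set.Ioi (1:ℝ), ENNReal.ofReal (u ^ ((2 * (n:ℝ)) * p⁻¹))) *
                    volume (ball (0 : Cn n) 1) := by
                  rw [lintegral_mul_const' _ _ measure_ball_lt_top.ne]
              _ < ⊤ := by
                  refine ENNReal.mul_lt_top ?_ measure_ball_lt_top
                  refine IntegrableOn.setLIntegral_lt_top ?_
                  refine integrableOn_Ioi_rpow_of_lt ?_ one_pos
                  rw [← div_eq_mul_inv, div_lt_iff_of_neg hp0]
                  linarith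

def lctFn {n : ℕ} (t c : ℝ) (φ : Cn n → EReal) (z : Cn n) : ℝ≥0∞ :=
  ENNReal.ofReal (‖z‖ ^ (2 * t)) * erealExp (((-(2 * c) : ℝ) : EReal) * φ z)

lemma lctIntegrable_iff_ball {n : ℕ} {t c : ℝ} {φ : Cn n → EReal} :
    lctIntegrable t c φ ↔ ∃ ε : ℝ, 0 < ε ∧ ε ≤ 1 ∧
      (∫⁻ z in ball (0 : Cn n) ε, lctFn t c φ z ∂volume) < ⊤ := by
  constructor
  · rintro ⟨U, hU, hI⟩
    obtain ⟨ε, hε, hball⟩ := Metric.mem_nhds_iff.1 hU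
    refine ⟨min ε 1, by positivity, min_le_right _ _, lt_of_le_of_lt ?_ hI⟩
    exact lintegral_mono' (Measure.restrict_mono
      (fun z hz => hball ((ball_subset_ball (min_le_left _ _)) hz)) le_rfl) le_rfl
  · rintro ⟨ε, hε, _, hI⟩
    exact ⟨ball 0 ε, ball_mem_nhds _ hε, hI⟩

lemma ae_ne_zero_ball {n : ℕ} (hn : 0 < n) (ε : ℝ) :
    ∀ᵐ z ∂((volume : Measure (Cn n)).restrict (ball 0 ε)), z ≠ 0 := by
  refine ae_restrict_of_ae ?_
  rw [ae_iff]
  have h1 : {z : Cn n | ¬ z ≠ 0} = {0} := by ext z; simp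
  rw [h1]
  exact Cn.volume_singleton hn 0

lemma lctIntegrable_mono_t {n : ℕ} (hn : 0 < n) {t t' c : ℝ} (h : t ≤ t') {φ : Cn n → EReal} :
    lctIntegrable t c φ → lctIntegrable t' c φ := by
  rw [lctIntegrable_iff_ball, lctIntegrable_iff_ball]
  rintro ⟨ε, hε, hε1, hI⟩
  refine ⟨ε, hε, hε1, lt_of_le_of_lt (lintegral_mono_ae ?_) hI⟩
  filter_upwards [ae_ne_zero_ball hn ε, ae_restrict_mem measurableSet_ball] with z hz hzb
  have hz0 : 0 < ‖z‖ := norm_pos_iff.2 hz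
  have hz1 : ‖z‖ ≤ 1 := by
    rw [mem_ball, dist_zero_right] at hzb
    exact hzb.le.trans hε1
  exact mul_le_mul_left (ENNReal.ofReal_le_ofReal
    (Real.rpow_le_rpow_of_exponent_ge hz0 hz1 (by linarith))) _

lemma lctIntegrable_mono_c {n : ℕ} {t c c' M : ℝ} (hc : 0 ≤ c) (hcc' : c ≤ c')
    {φ : Cn n → EReal} (hM : ∀ᶠ z in 𝓝 (0 : Cn n), φ z ≤ (M : EReal)) :
    lctIntegrable t c' φ → lctIntegrable t c φ := by
  rw [lctIntegrable_iff_ball, lctIntegrable_iff_ball]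
  rintro ⟨ε, hε, hε1, hI⟩
  obtain ⟨δ, hδ, hδM⟩ := Metric.eventually_nhds_iff_ball.1 hM
  set K := ENNReal.ofReal (Real.exp (2 * (c' - c) * M)) with hK
  refine ⟨min ε δ, by positivity, (min_le_left _ _).trans hε1, ?_⟩
  calc (∫⁻ z in ball (0 : Cn n) (min ε δ), lctFn t c φ z ∂volume)
      ≤ ∫⁻ z in ball (0 : Cn n) (min ε δ), K * lctFn t c' φ z ∂volume := by
        refine lintegral_mono_ae ?_
        filter_upwards [ae_restrict_mem measurableSet_ball] with z hzb
        have hφM : φ z ≤ (M : EReal) :=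
          hδM z ((ball_subset_ball (min_le_right _ _)) hzb)
        calc lctFn t c φ z
            ≤ ENNReal.ofReal (‖z‖ ^ (2 * t)) *
                (K * erealExp (((-(2 * c') : ℝ) : EReal) * φ z)) :=
              mul_le_mul_right (exp_mono_pt hc hcc' hφM) _
          _ = K * lctFn t c' φ z := by rw [lctFn]; ring
    _ = K * ∫⁻ z in ball (0 : Cn n) (min ε δ), lctFn t c' φ z ∂volume :=
        lintegral_const_mul' _ _ ENNReal.ofReal_ne_top
    _ ≤ K * ∫⁻ z in ball (0 : Cn n) ε, lctFn t c' φ z ∂volume :=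
        mul_le_mul_right (lintegral_mono' (Measure.restrict_mono
          (ball_subset_ball (min_le_left _ _)) le_rfl) le_rfl) _
    _ < ⊤ := ENNReal.mul_lt_top ENNReal.ofReal_lt_top hI

lemma lctIntegrable_shift {n : ℕ} (hn : 0 < n) {s c b : ℝ} (hc : 0 ≤ c) {φ : Cn n → EReal}
    (hTop : ∀ᶠ z in 𝓝 (0 : Cn n), φ z ≠ ⊤) :
    lctIntegrable s c (fun z => φ z + (b : EReal) * elog ‖z‖) ↔
      lctIntegrable (s - c * b) c φ := by
  obtain ⟨δ, hδ, hδT⟩ := Metric.eventually_nhds_iff_ball.1 hTop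
  have key : ∀ ε : ℝ, 0 < ε → ε ≤ δ →
      (∫⁻ z in ball (0 : Cn n) ε, lctFn s c (fun z => φ z + (b : EReal) * elog ‖z‖) z ∂volume) =
      ∫⁻ z in ball (0 : Cn n) ε, lctFn (s - c * b) c φ z ∂volume := by
    intro ε hε hεδ
    refine lintegral_congr_ae ?_
    filter_upwards [ae_ne_zero_ball hn ε, ae_restrict_mem measurableSet_ball] with z hz hzb
    have hz0 : 0 < ‖z‖ := norm_pos_iff.2 hz
    have hzT : φ z ≠ ⊤ := hδT z ((ball_subset_ball hεδ) hzb)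
    exact shift_pt hc hz0 hzT
  rw [lctIntegrable_iff_ball, lctIntegrable_iff_ball]
  constructor
  · rintro ⟨ε, hε, hε1, hI⟩
    refine ⟨min ε δ, by positivity, (min_le_left _ _).trans hε1, ?_⟩
    rw [← key _ (by positivity) (min_le_right _ _)]
    exact lt_of_le_of_lt (lintegral_mono' (Measure.restrict_mono
      (ball_subset_ball (min_le_left _ _)) le_rfl) le_rfl) hI
  · rintro ⟨ε, hε, hε1, hI⟩
    refine ⟨min ε δ, by positivity, (min_le_left _ _).trans hε1, ?_⟩
    rw [key _ (by positivity) (min_le_right _ _)]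
    exact lt_of_le_of_lt (lintegral_mono' (Measure.restrict_mono
      (ball_subset_ball (min_le_left _ _)) le_rfl) le_rfl) hI
lemma le_lct {n : ℕ} {t c : ℝ} {φ : Cn n → EReal} (hc : 0 ≤ c) (hi : lctIntegrable t c φ) :
    ENNReal.ofReal c ≤ lct t φ :=
  le_biSup _ (show c ∈ {c : ℝ | 0 ≤ c ∧ lctIntegrable t c φ} from ⟨hc, hi⟩)

lemma lct_le {n : ℕ} {t : ℝ} {φ : Cn n → EReal} {m : ℝ≥0∞}
    (H : ∀ c : ℝ, 0 ≤ c → lctIntegrable t c φ → ENNReal.ofReal c ≤ m) : lct t φ ≤ m :=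
  iSup₂_le fun c hc => H c hc.1 hc.2

lemma young_extract {n : ℕ} (hn : 0 < n) {t s c : ℝ} (ht : -(n : ℝ) < t) (hts : t ≤ s)
    (hc : 0 < c) {φ : Cn n → EReal} (hTop : ∀ᶠ z in 𝓝 (0 : Cn n), φ z ≠ ⊤)
    (hi : lctIntegrable s c φ) : ∃ c' : ℝ, 0 < c' ∧ lctIntegrable t c' φ := by
  have hn0 : (0 : ℝ) < (n : ℝ) := by exact_mod_cast hn
  have htn : 0 < t + n := by linarith
  have hsn : 0 < s + n := by linarith
  set θ : ℝ := (t + n) / (2 * (s + n)) with hθ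
  have hθ0 : 0 < θ := by positivity
  have hθ1 : θ < 1 := by
    rw [hθ, div_lt_one (by positivity)]
    linarith
  set u : ℝ := (t - θ * s) / (1 - θ) with hu
  have hun : -(n : ℝ) < u := by
    rw [hu, lt_div_iff₀ (by linarith)]
    have hθs : θ * (s + n) = (t + n) / 2 := by
      rw [hθ]; field_simp
    nlinarith [hθs]
  obtain ⟨δ, hδ, hδT⟩ := Metric.eventually_nhds_iff_ball.1 hTop
  rw [lctIntegrable_iff_ball] at hi
  obtain ⟨ε, hε, hε1, hI⟩ := hi
  refine ⟨θ * c, by positivity, ?_⟩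
  rw [lctIntegrable_iff_ball]
  refine ⟨min ε δ, by positivity, (min_le_left _ _).trans hε1, ?_⟩
  have hg : Measurable fun z : Cn n => ENNReal.ofReal (‖z‖ ^ (2 * u)) := by fun_prop
  calc (∫⁻ z in ball (0 : Cn n) (min ε δ), lctFn t (θ * c) φ z ∂volume)
      ≤ ∫⁻ z in ball (0 : Cn n) (min ε δ),
          (lctFn s c φ z + ENNReal.ofReal (‖z‖ ^ (2 * u))) ∂volume := by
        refine lintegral_mono_ae ?_
        filter_upwards [ae_ne_zero_ball hn _, ae_restrict_mem measurableSet_ball] with z hz hzb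
        have hz0 : 0 < ‖z‖ := norm_pos_iff.2 hz
        have hzT : φ z ≠ ⊤ := hδT z ((ball_subset_ball (min_le_right _ _)) hzb)
        calc lctFn t (θ * c) φ z
            = (lctFn s c φ z) ^ θ * (ENNReal.ofReal (‖z‖ ^ (2 * u))) ^ (1 - θ) :=
              young_pt hθ0 hθ1 hc hz0 hzT
          _ ≤ lctFn s c φ z + ENNReal.ofReal (‖z‖ ^ (2 * u)) :=
              ennreal_young hθ0.le hθ1.le
    _ = (∫⁻ z in ball (0 : Cn n) (min ε δ), lctFn s c φ z ∂volume) +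
          ∫⁻ z in ball (0 : Cn n) (min ε δ), ENNReal.ofReal (‖z‖ ^ (2 * u)) ∂volume :=
        lintegral_add_right _ hg
    _ < ⊤ := by
        refine ENNReal.add_lt_top.2 ⟨?_, ?_⟩
        · exact lt_of_le_of_lt (lintegral_mono' (Measure.restrict_mono
            (ball_subset_ball (min_le_left _ _)) le_rfl) le_rfl) hI
        · refine lt_of_le_of_lt (lintegral_mono' (Measure.restrict_mono
            (ball_subset_ball ((min_le_left _ _).trans hε1)) le_rfl) le_rfl) ?_
          exact finite_rpow_ball hn (by linarith)
lemma exists_nhds_bound {n : ℕ} {Ω : Set (Cn n)} (hΩopen : IsOpen Ω) (h0 : (0 : Cn n) ∈ Ω)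
    {φ : Cn n → EReal} (husc : UpperSemicontinuousOn φ Ω) (hT : φ 0 ≠ ⊤) :
    ∃ M : ℝ, ∀ᶠ z in 𝓝 (0 : Cn n), φ z ≤ (M : EReal) := by
  obtain ⟨M, hM, -⟩ := EReal.exists_between_coe_real (lt_top_iff_ne_top.2 hT)
  have h1 : ∀ᶠ z in 𝓝[Ω] (0 : Cn n), φ z < (M : EReal) := husc 0 h0 (M : EReal) hM
  rw [nhdsWithin_eq_nhds.2 (hΩopen.mem_nhds h0)] at h1
  exact ⟨M, h1.mono fun z hz => hz.le⟩

lemma coe_mul_elog_nonpos {b x : ℝ} (hb : 0 ≤ b) (hx : x ≤ 1) :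
    (b : EReal) * elog x ≤ 0 := by
  rcases hb.eq_or_lt with h0 | h0
  · rw [← h0]; norm_num
  rcases le_or_gt x 0 with hx0 | hx0
  · rw [show elog x = ⊥ from if_pos hx0, EReal.coe_mul_bot_of_pos h0]
    exact bot_le
  · rw [elog_pos_eq hx0, ← EReal.coe_mul]
    have : b * Real.log x ≤ 0 :=
      mul_nonpos_iff.2 (Or.inl ⟨hb, Real.log_nonpos hx0.le hx⟩)
    exact_mod_cast this

/-- If `a := c_t(φ) < +∞`, then for every `s ≥ t` one has
`a = c_s(φ + ((s-t)/a)·log‖z‖)`. -/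
theorem statement5 {n : ℕ} (hn : 0 < n) (Ω : Set (Cn n)) (hΩ : IsCnDomain Ω)
    (h0 : (0 : Cn n) ∈ Ω) (t : ℝ) (ht : -(n : ℝ) < t)
    (φ : Cn n → EReal) (hφ : PshOn φ Ω) (hfin : lct t φ < ⊤) :
    ∀ s : ℝ, t ≤ s →
      lct s (fun z : Cn n =>
        φ z + (((s - t) / (lct t φ).toReal : ℝ) : EReal) * elog ‖z‖) = lct t φ := by
  intro s hts
  obtain ⟨M, hM⟩ := exists_nhds_bound hΩ.1 h0 hφ.1 (hφ.2.2.1 0 h0)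
  have hTop : ∀ᶠ z in 𝓝 (0 : Cn n), φ z ≠ ⊤ :=
    hM.mono fun z hz => (hz.trans_lt (EReal.coe_lt_top M)).ne
  set A := lct t φ with hA
  set a := A.toReal with ha
  have ha0 : 0 ≤ a := ENNReal.toReal_nonneg
  have hAa : A = ENNReal.ofReal a := (ENNReal.ofReal_toReal hfin.ne).symm
  set b : ℝ := (s - t) / a with hb
  have hb0 : 0 ≤ b := div_nonneg (by linarith) ha0
  have hab : a * b ≤ s - t := by
    rcases eq_or_lt_of_le ha0 with h | h
    · rw [← h, zero_mul]; linarith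
    · have : a * b = s - t := by rw [hb]; field_simp
      linarith
  refine le_antisymm ?_ ?_
  · -- lct s ψ ≤ A
    refine lct_le fun c hc0 hci => ?_
    have hci' : lctIntegrable (s - c * b) c φ := (lctIntegrable_shift hn hc0 hTop).1 hci
    rcases le_or_gt c a with hca | hca
    · rw [hAa]; exact ENNReal.ofReal_le_ofReal hca
    exfalso
    rcases eq_or_lt_of_le ha0 with haz | haz
    · -- a = 0
      have hc_pos : 0 < c := by rw [← haz] at hca; exact hca
      have hb0' : b = 0 := by rw [hb, ← haz, div_zero]
      have hsc : lctIntegrable s c φ := by rwa [hb0', mul_zero, sub_zero] at hci'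
      obtain ⟨c', hc', hic'⟩ := young_extract hn ht hts hc_pos hTop hsc
      have h1 : ENNReal.ofReal c' ≤ A := le_lct hc'.le hic'
      rw [hAa, ← haz, ENNReal.ofReal_zero, le_zero_iff, ENNReal.ofReal_eq_zero] at h1
      linarith
    · -- a > 0
      have haeq : a * b = s - t := by rw [hb]; field_simp
      have htt : s - c * b ≤ t := by nlinarith [mul_le_mul_of_nonneg_right hca.le hb0]
      have h2 : lctIntegrable t c φ := lctIntegrable_mono_t hn htt hci'
      have h3 : ENNReal.ofReal c ≤ A := le_lct hc0 h2
      rw [hAa, ENNReal.ofReal_le_ofReal_iff ha0] at h3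
      linarith
  · -- A ≤ lct s ψ
    refine lct_le fun c hc0 hci => ?_
    have hca : c ≤ a := by
      have h1 := le_lct hc0 hci
      rwa [← hA, hAa, ENNReal.ofReal_le_ofReal_iff ha0] at h1
    have htt : t ≤ s - c * b := by nlinarith [mul_le_mul_of_nonneg_right hca hb0]
    have h2 : lctIntegrable (s - c * b) c φ := lctIntegrable_mono_t hn htt hci
    exact le_lct hc0 ((lctIntegrable_shift hn hc0 hTop).2 h2)

end
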